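/- Let A_0 = (1/√6)·[[2,0],[0,1],[0,1],[0,0]] and A_1 = (1/√6)·[[0,0],[1,0],[1,0],[0,2]] be 4×2 complex matrices. Then A_0*A_0 + A_1*A_1 = I_2, and for every unit vector |ψ⟩ ∈ ℂ² it holds that ⟨ψ ⊗ ψ| (A_0 |ψ⟩⟨ψ| A_0* + A_1 |ψ⟩⟨ψ| A_1*) |ψ ⊗ ψ⟩ = 2/3, where ℂ⁴ is identified with ℂ²⊗ℂ². -/
import Mathlib


open Matrix

/-- Tensor product `u ⊗ v ∈ ℂ⁴` of two qubit vectors, with respect to the basis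
ordering `|00⟩, |01⟩, |10⟩, |11⟩`. -/
def tens4 (u v : Fin 2 → ℂ) : Fin 4 → ℂ :=
  ![u 0 * v 0, u 0 * v 1, u 1 * v 0, u 1 * v 1]

/-- The first Kraus operator of the Bužek–Hillery universal qubit cloner. -/
noncomputable def B₀ : Matrix (Fin 4) (Fin 2) ℂ :=
  (Real.sqrt 6 : ℂ)⁻¹ • !![2, 0; 0, 1; 0, 1; 0, 0]

/-- The second Kraus operator of the Bužek–Hillery universal qubit cloner. -/
noncomputable def B₁ : Matrix (Fin 4) (Fin 2) ℂ :=
  (Real.sqrt 6 : ℂ)⁻¹ • !![0, 0; 1, 0; 1, 0; 0, 2]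

set_option maxHeartbeats 2000000 in
/-- The Bužek–Hillery Kraus operators satisfy `B₀*B₀ + B₁*B₁ = I`, and the resulting
channel `ρ ↦ B₀ ρ B₀* + B₁ ρ B₁*` clones every unit vector `|ψ⟩ ∈ ℂ²` with success
probability `⟨ψ ⊗ ψ| Φ(|ψ⟩⟨ψ|) |ψ ⊗ ψ⟩` exactly `2/3`. -/
theorem buzek_hillery_cloner :
    B₀ᴴ * B₀ + B₁ᴴ * B₁ = 1 ∧
    ∀ ψ : Fin 2 → ℂ, star ψ ⬝ᵥ ψ = 1 →
      star (tens4 ψ ψ) ⬝ᵥ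
        (B₀ * vecMulVec ψ (star ψ) * B₀ᴴ +
         B₁ * vecMulVec ψ (star ψ) * B₁ᴴ).mulVec (tens4 ψ ψ) = (2 / 3 : ℂ) := by
  have hs : star ((Real.sqrt 6 : ℂ)⁻¹) = (Real.sqrt 6 : ℂ)⁻¹ := by
    simp [star_inv₀, Complex.conj_ofReal]
  have ht : ((Real.sqrt 6 : ℂ)⁻¹) * ((Real.sqrt 6 : ℂ)⁻¹) = 1/6 := by
    rw [← mul_inv]
    norm_cast
    rw [Real.mul_self_sqrt (by norm_num)]
    norm_num
  constructor
  · ext i j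
    fin_cases i <;> fin_cases j <;>
      simp [B₀, B₁, Matrix.mul_apply, Fin.sum_univ_succ, Matrix.one_apply, hs, Complex.conj_ofReal] <;>
      ring_nf <;>
      simp [pow_two, ht, map_ofNat] <;> norm_num [pow_two, ht]
  · intro ψ h
    simp only [dotProduct, Fin.sum_univ_succ, Fin.sum_univ_zero] at h ⊢
    simp [B₀, B₁, tens4, Matrix.mul_apply, Matrix.mulVec, Matrix.vecMul, dotProduct,
      vecMulVec_apply, Matrix.conjTranspose_apply, Fin.sum_univ_succ, hs, Complex.conj_ofReal]
    ring_nf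
    have ht2 : ((Real.sqrt 6 : ℂ)⁻¹) ^ 2 = 1/6 := by rw [sq, ht]
    simp only [ht2, map_ofNat, Pi.star_apply, RCLike.star_def, Fin.succ_zero_eq_one,
      add_zero] at h ⊢
    linear_combination (2/3 * ((starRingEnd ℂ (ψ 0) * ψ 0 + starRingEnd ℂ (ψ 1) * ψ 1)^2 +
      (starRingEnd ℂ (ψ 0) * ψ 0 + starRingEnd ℂ (ψ 1) * ψ 1) + 1)) * h
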